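/- Let K be a field and H ∈ K[x]ⁿ a polynomial map with symmetric Jacobian matrix JH. If for each i the i-th diagonal entry of JH has no terms whose degree with respect to xᵢ is congruent to −2 in K (i.e., equals −2 as an element of K), then there exists a polynomial h ∈ K[x] such that H = (Jh)ᵀ and JH equals the Hessian matrix of h. -/

import Mathlib

open MvPolynomial

open scoped Classical

namespace Stmt12Aux
variable {K : Type*} [Field K] {n : ℕ}

noncomputable def intg (i : Fin n) (f : MvPolynomial (Fin n) K) : MvPolynomial (Fin n) K :=
  (AddMonoidAlgebra.coeff f).sum fun d c => monomial (d + Finsupp.single i 1) (c / ((d i : K) + 1))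

noncomputable def psi (t : ℕ) (f : MvPolynomial (Fin n) K) : MvPolynomial (Fin n) K :=
  (AddMonoidAlgebra.coeff f).sum fun d c =>
    if ∀ k : Fin n, t ≤ (k : ℕ) → ((d k : ℕ) : K) = 0 then monomial d c else 0

theorem intg_monomial (i : Fin n) (d : Fin n →₀ ℕ) (c : K) :
    intg i (monomial d c) = monomial (d + Finsupp.single i 1) (c / ((d i : K) + 1)) := by
  rw [intg, sum_monomial_eq]; simp

theorem intg_add (i : Fin n) (f g : MvPolynomial (Fin n) K) :
    intg i (f + g) = intg i f + intg i g := by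
  unfold intg; rw [AddMonoidAlgebra.coeff_add]; exact Finsupp.sum_add_index' (by simp) (by intro d c₁ c₂; simp [add_div])

theorem intg_zero (i : Fin n) : intg i (0 : MvPolynomial (Fin n) K) = 0 := by
  unfold intg; rw [AddMonoidAlgebra.coeff_zero]; exact Finsupp.sum_zero_index

theorem psi_monomial (t : ℕ) (d : Fin n →₀ ℕ) (c : K) :
    psi t (monomial d c)
      = if ∀ k : Fin n, t ≤ (k : ℕ) → ((d k : ℕ) : K) = 0 then monomial d c else 0 := by
  rw [psi, sum_monomial_eq]; split_ifs <;> simp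

theorem psi_add (t : ℕ) (f g : MvPolynomial (Fin n) K) :
    psi t (f + g) = psi t f + psi t g := by
  unfold psi; rw [AddMonoidAlgebra.coeff_add]; exact Finsupp.sum_add_index' (by intro d; split_ifs <;> simp)
    (by intro d c₁ c₂; split_ifs <;> simp)

theorem pderiv_psi_of_le (t : ℕ) (j : Fin n) (ht : t ≤ (j : ℕ)) (f : MvPolynomial (Fin n) K) :
    pderiv j (psi t f) = 0 := by
  induction f using MvPolynomial.induction_on' with
  | monomial d c =>
    rw [psi_monomial]
    split_ifs with hc
    · rw [pderiv_monomial, hc j ht, mul_zero, map_zero]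
    · simp
  | add f g ihf ihg => rw [psi_add, map_add, ihf, ihg, add_zero]

theorem pderiv_psi_comm (t : ℕ) (j : Fin n) (ht : (j : ℕ) < t) (f : MvPolynomial (Fin n) K) :
    pderiv j (psi t f) = psi t (pderiv j f) := by
  induction f using MvPolynomial.induction_on' with
  | monomial d c =>
    rw [psi_monomial, pderiv_monomial, psi_monomial]
    have hkey : ∀ k : Fin n, t ≤ (k : ℕ) → (d - Finsupp.single j 1 : Fin n →₀ ℕ) k = d k := by
      intro k hk
      have hjk : j ≠ k := by intro h; subst h; omega
      rw [Finsupp.tsub_apply, Finsupp.single_apply, if_neg hjk, Nat.sub_zero]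
    have hcond : (∀ k : Fin n, t ≤ (k : ℕ) → ((((d - Finsupp.single j 1 : Fin n →₀ ℕ) k : ℕ)) : K) = 0)
        ↔ (∀ k : Fin n, t ≤ (k : ℕ) → ((d k : ℕ) : K) = 0) := by
      constructor <;> intro h k hk
      · rw [← hkey k hk]; exact h k hk
      · rw [hkey k hk]; exact h k hk
    split_ifs with h1 h2 h2
    · rw [pderiv_monomial]
    · exact absurd (hcond.mpr h1) h2
    · exact absurd (hcond.mp h2) h1
    · simp
  | add f g ihf ihg => rw [psi_add, map_add, map_add, ihf, ihg, psi_add]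

theorem pderiv_intg_comm (i j : Fin n) (hij : j ≠ i) (f : MvPolynomial (Fin n) K) :
    pderiv j (intg i f) = intg i (pderiv j f) := by
  induction f using MvPolynomial.induction_on' with
  | monomial d c =>
    rw [intg_monomial, pderiv_monomial, pderiv_monomial, intg_monomial]
    have h1 : (d + Finsupp.single i 1 : Fin n →₀ ℕ) j = d j := by
      rw [Finsupp.add_apply, Finsupp.single_apply, if_neg (Ne.symm hij), Nat.add_zero]
    have h2 : (d - Finsupp.single j 1 : Fin n →₀ ℕ) i = d i := by
      rw [Finsupp.tsub_apply, Finsupp.single_apply, if_neg hij, Nat.sub_zero]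
    have h3 : (d + Finsupp.single i 1) - Finsupp.single j 1
        = (d - Finsupp.single j 1) + Finsupp.single i 1 := by
      ext k
      simp only [Finsupp.tsub_apply, Finsupp.add_apply, Finsupp.single_apply]
      split_ifs with hik hjk hjk
      · exact absurd (hjk.trans hik.symm) hij
      · omega
      · omega
      · omega
    rw [h1, h2, h3, div_mul_eq_mul_div]
  | add f g ihf ihg => rw [intg_add, map_add, map_add, ihf, ihg, intg_add]


theorem coeff_psi (t : ℕ) (e : Fin n →₀ ℕ) (f : MvPolynomial (Fin n) K) :
    coeff e (psi t f)
      = if ∀ k : Fin n, t ≤ (k : ℕ) → ((e k : ℕ) : K) = 0 then coeff e f else 0 := by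
  induction f using MvPolynomial.induction_on' with
  | monomial d c =>
    rw [psi_monomial]
    by_cases hde : d = e
    · subst hde
      split_ifs <;> rfl
    · have hc2 : coeff e (monomial d c) = 0 := by
        rw [coeff_monomial, if_neg hde]
      split_ifs <;> simp [hc2]
  | add f g ihf ihg =>
    rw [psi_add, coeff_add, ihf, ihg, coeff_add]
    split_ifs <;> simp

theorem psi_top (f : MvPolynomial (Fin n) K) : psi n f = f := by
  induction f using MvPolynomial.induction_on' with
  | monomial d c =>
    rw [psi_monomial, if_pos]
    intro k hk
    exact absurd k.isLt (by omega)
  | add f g ihf ihg => rw [psi_add, ihf, ihg]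

theorem pderiv_intg_self (i : Fin n) (f : MvPolynomial (Fin n) K)
    (hf : ∀ d ∈ f.support, ((d i : ℕ) : K) + 1 ≠ 0) :
    pderiv i (intg i f) = f := by
  rw [intg, sum_def, map_sum]
  have : ∀ d ∈ f.support,
      pderiv i (monomial (d + Finsupp.single i 1) (coeff d f / ((d i : K) + 1)))
        = monomial d (coeff d f) := by
    intro d hd
    rw [pderiv_monomial, add_tsub_cancel_right]
    have h1 : (d + Finsupp.single i 1 : Fin n →₀ ℕ) i = d i + 1 := by
      rw [Finsupp.add_apply, Finsupp.single_eq_same]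
    rw [h1]
    push_cast
    rw [div_mul_cancel₀ _ (hf d hd)]
  exact (Finset.sum_congr rfl this).trans (support_sum_monomial_coeff f)

theorem intg_pderiv_psi (i : Fin n) (f : MvPolynomial (Fin n) K) :
    intg i (pderiv i (psi ((i : ℕ) + 1) f)) = psi ((i : ℕ) + 1) f - psi (i : ℕ) f := by
  induction f using MvPolynomial.induction_on' with
  | monomial d c =>
    rw [psi_monomial, psi_monomial]
    by_cases h1 : ∀ k : Fin n, (i : ℕ) + 1 ≤ (k : ℕ) → ((d k : ℕ) : K) = 0
    · rw [if_pos h1, pderiv_monomial, intg_monomial]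
      by_cases h0 : ((d i : ℕ) : K) = 0
      · have hc0 : ∀ k : Fin n, (i : ℕ) ≤ (k : ℕ) → ((d k : ℕ) : K) = 0 := by
          intro k hk
          rcases eq_or_lt_of_le hk with h | h
          · have : i = k := Fin.ext h
            subst this; exact h0
          · exact h1 k h
        rw [if_pos hc0, sub_self, h0, mul_zero]
        simp
      · have hd1 : 1 ≤ d i := by
          by_contra hdk
          push_neg at hdk
          apply h0
          have : d i = 0 := by omega
          rw [this]; simp
        have hc0 : ¬ ∀ k : Fin n, (i : ℕ) ≤ (k : ℕ) → ((d k : ℕ) : K) = 0 :=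
          fun hc => h0 (hc i le_rfl)
        rw [if_neg hc0, sub_zero]
        have h2 : (d - Finsupp.single i 1 : Fin n →₀ ℕ) i = d i - 1 := by
          rw [Finsupp.tsub_apply, Finsupp.single_eq_same]
        have h3 : (d - Finsupp.single i 1) + Finsupp.single i 1 = d := by
          apply tsub_add_cancel_of_le
          exact Finsupp.single_le_iff.mpr hd1
        rw [h2, h3]
        have h4 : ((d i - 1 : ℕ) : K) + 1 = ((d i : ℕ) : K) := by
          rw [Nat.cast_sub hd1]; ring
        rw [h4, mul_div_assoc, div_self h0, mul_one]
    · have hc0 : ¬ ∀ k : Fin n, (i : ℕ) ≤ (k : ℕ) → ((d k : ℕ) : K) = 0 :=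
        fun hc => h1 (fun k hk => hc k (by omega))
      rw [if_neg h1, if_neg hc0, map_zero, intg_zero, sub_zero]
  | add f g ihf ihg =>
    rw [psi_add, psi_add, map_add, intg_add, ihf, ihg]
    abel

theorem coeff_pderiv (i : Fin n) (m : Fin n →₀ ℕ) (f : MvPolynomial (Fin n) K) :
    coeff m (pderiv i f) = coeff (m + Finsupp.single i 1) f * ((m i + 1 : ℕ) : K) := by
  induction f using MvPolynomial.induction_on' with
  | monomial d c =>
    rw [pderiv_monomial]
    by_cases hd : d = m + Finsupp.single i 1
    · subst hd
      rw [add_tsub_cancel_right, coeff_monomial, if_pos rfl, coeff_monomial, if_pos rfl]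
      congr 1
      rw [Finsupp.add_apply, Finsupp.single_eq_same]
    · have hc2 : coeff (m + Finsupp.single i 1) (monomial d c) = 0 := by
        rw [coeff_monomial, if_neg hd]
      rw [hc2, zero_mul]
      by_cases hdi : d i = 0
      · rw [coeff_monomial]
        split_ifs
        · rw [hdi]; simp
        · rfl
      · have hne : d - Finsupp.single i 1 ≠ m := by
          intro h
          apply hd
          rw [← h, tsub_add_cancel_of_le (Finsupp.single_le_iff.mpr (by omega))]
        rw [coeff_monomial, if_neg hne]
  | add f g ihf ihg => rw [map_add, coeff_add, ihf, ihg, coeff_add, add_mul]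

end Stmt12Aux


open Stmt12Aux

/-- If `JH` is symmetric and for each `i` the `i`-th diagonal entry of `JH` has no term
whose degree with respect to `xᵢ` equals `−2` in `K`, then `H = (Jh)ᵀ` for some polynomial
`h`, and `JH` is the Hessian matrix of `h`. -/
theorem stmt12 (K : Type*) [Field K] (n : ℕ) (H : Fin n → MvPolynomial (Fin n) K)
    (hsym : ∀ i j, pderiv j (H i) = pderiv i (H j))
    (hdiag : ∀ i : Fin n, ∀ d ∈ (pderiv i (H i)).support, ((d i : ℕ) : K) ≠ -2) :
    ∃ h : MvPolynomial (Fin n) K,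
      (∀ i, H i = pderiv i h) ∧
      ∀ i j, pderiv j (H i) = pderiv j (pderiv i h) := by
  classical
  -- key integrability condition on the diagonal
  have K1 : ∀ j : Fin n, ∀ d ∈ (H j).support, ((d j : ℕ) : K) + 1 ≠ 0 := by
    intro j d hd hcontra
    have hdj : ((d j : ℕ) : K) = -1 := by linear_combination hcontra
    have hdj0 : ((d j : ℕ) : K) ≠ 0 := by
      rw [hdj]; exact neg_ne_zero.mpr one_ne_zero
    have hd1 : 1 ≤ d j := by
      by_contra hc
      push_neg at hc
      apply hdj0
      have : d j = 0 := by omega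
      rw [this]; simp
    set m := d - Finsupp.single j 1 with hm
    have hmd : m + Finsupp.single j 1 = d :=
      tsub_add_cancel_of_le (Finsupp.single_le_iff.mpr hd1)
    have hmj : m j = d j - 1 := by
      rw [hm, Finsupp.tsub_apply, Finsupp.single_eq_same]
    have hcoeff : coeff m (pderiv j (H j)) ≠ 0 := by
      rw [Stmt12Aux.coeff_pderiv, hmd, hmj, Nat.sub_add_cancel hd1]
      exact mul_ne_zero (MvPolynomial.mem_support_iff.mp hd) hdj0
    have hmem : m ∈ (pderiv j (H j)).support := MvPolynomial.mem_support_iff.mpr hcoeff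
    apply hdiag j m hmem
    rw [hmj, Nat.cast_sub hd1, hdj]
    push_cast
    ring
  set h := ∑ i : Fin n, intg i (psi ((i : ℕ) + 1) (H i)) with hh
  have key : ∀ j, pderiv j h = H j := by
    intro j
    set G : ℕ → MvPolynomial (Fin n) K :=
      fun t => if (j : ℕ) < t then psi t (H j) else 0 with hG
    have hGlt : ∀ t : ℕ, (j : ℕ) < t → G t = psi t (H j) := fun t ht => if_pos ht
    have hGle : ∀ t : ℕ, t ≤ (j : ℕ) → G t = 0 := fun t ht => if_neg (by omega)
    have hterm : ∀ i : Fin n,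
        pderiv j (intg i (psi ((i : ℕ) + 1) (H i))) = G ((i : ℕ) + 1) - G (i : ℕ) := by
      intro i
      rcases lt_trichotomy (i : ℕ) (j : ℕ) with hij | hij | hij
      · have hji : j ≠ i := by intro hc; subst hc; omega
        rw [pderiv_intg_comm i j hji, pderiv_psi_of_le ((i : ℕ) + 1) j (by omega), intg_zero,
          hGle ((i : ℕ) + 1) (by omega), hGle (i : ℕ) (by omega), sub_zero]
      · have hijF : i = j := Fin.ext hij
        subst hijF
        rw [pderiv_intg_self i (psi ((i : ℕ) + 1) (H i)) ?_,
          hGlt ((i : ℕ) + 1) (by omega), hGle (i : ℕ) le_rfl, sub_zero]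
        · intro d hd
          apply K1 i d
          have := MvPolynomial.mem_support_iff.mp hd
          rw [coeff_psi] at this
          by_cases hc : ∀ k : Fin n, (i : ℕ) + 1 ≤ (k : ℕ) → ((d k : ℕ) : K) = 0
          · rw [if_pos hc] at this
            exact MvPolynomial.mem_support_iff.mpr this
          · rw [if_neg hc] at this
            exact absurd rfl this
      · have hji : j ≠ i := by intro hc; subst hc; omega
        rw [pderiv_intg_comm i j hji, pderiv_psi_comm ((i : ℕ) + 1) j (by omega),
          hsym i j, ← pderiv_psi_comm ((i : ℕ) + 1) i (by omega), intg_pderiv_psi,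
          hGlt ((i : ℕ) + 1) (by omega), hGlt (i : ℕ) (by omega)]
    calc pderiv j h = ∑ i : Fin n, (G ((i : ℕ) + 1) - G (i : ℕ)) := by
          rw [hh, map_sum]
          exact Finset.sum_congr rfl fun i _ => hterm i
      _ = ∑ i ∈ Finset.range n, (G (i + 1) - G i) := by
          rw [Fin.sum_univ_eq_sum_range (fun i => G (i + 1) - G i) n]
      _ = G n - G 0 := Finset.sum_range_sub G n
      _ = H j := by
          rw [hGlt n j.isLt, hGle 0 (by omega), sub_zero, psi_top]
  exact ⟨h, fun i => (key i).symm, fun i j => by rw [key i]⟩
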